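/- For the complex associated to a linear map ∂ : C → E of finite-dimensional vector spaces as above, the cohomology in degree 1 (cokernel of δ₁) is isomorphic to Hom(ker ∂, coker ∂). -/

import Mathlib

variable {C E : Type*} [AddCommGroup C] [Module ℝ C] [AddCommGroup E] [Module ℝ E]

/-- The degree `-1` differential `δ₀(φ) = (φ∘∂, ∂∘φ)` of the deformation complex
of a linear map `∂ : C → E`. -/
def delta0 (p : C →ₗ[ℝ] E) :
    (E →ₗ[ℝ] C) →ₗ[ℝ] (C →ₗ[ℝ] C) × (E →ₗ[ℝ] E) where
  toFun φ := (φ.comp p, p.comp φ)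
  map_add' φ ψ := by ext <;> simp
  map_smul' r φ := by ext <;> simp

/-- The degree `0` differential `δ₁(ψ_C, ψ_E) = ∂∘ψ_C − ψ_E∘∂`. -/
def delta1 (p : C →ₗ[ℝ] E) :
    ((C →ₗ[ℝ] C) × (E →ₗ[ℝ] E)) →ₗ[ℝ] (C →ₗ[ℝ] E) where
  toFun ψ := p.comp ψ.1 - ψ.2.comp p
  map_add' ψ χ := by ext x; simp; abel
  map_smul' r ψ := by ext x; simp [smul_sub]

/-- the degree `1` cohomology (cokernel of δ₁) of the deformation
complex of `∂ : C → E` is isomorphic to `Hom(ker ∂, coker ∂)`. -/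
theorem stmt11 [FiniteDimensional ℝ C] [FiniteDimensional ℝ E] (p : C →ₗ[ℝ] E) :
    Nonempty (((C →ₗ[ℝ] E) ⧸ LinearMap.range (delta1 p)) ≃ₗ[ℝ]
      (LinearMap.ker p →ₗ[ℝ] (E ⧸ LinearMap.range p))) := by
  classical
  set K := LinearMap.ker p with hK
  set R := LinearMap.range p with hR
  let ι : K →ₗ[ℝ] C := K.subtype
  let π : E →ₗ[ℝ] E ⧸ R := R.mkQ
  let Φ : (C →ₗ[ℝ] E) →ₗ[ℝ] (K →ₗ[ℝ] E ⧸ R) :=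
    { toFun := fun f => π ∘ₗ f ∘ₗ ι
      map_add' := fun f g => by
        ext x; simp [LinearMap.add_comp, LinearMap.comp_add]
      map_smul' := fun r f => by
        ext x; simp }
  -- projection q : C → C onto K
  obtain ⟨W, hW⟩ := Submodule.exists_isCompl K
  let rC : C →ₗ[ℝ] K := K.linearProjOfIsCompl W hW
  let q : C →ₗ[ℝ] C := ι ∘ₗ rC
  have hqmem : ∀ c : C, q c ∈ K := fun c => (rC c).2
  have hqid : ∀ c : C, c ∈ K → q c = c := fun c hc => by
    exact congrArg Subtype.val (Submodule.linearProjOfIsCompl_apply_left hW ⟨c, hc⟩)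
  -- generalized inverse t : E → C with p (t e) = e for e ∈ R
  obtain ⟨W', hW'⟩ := Submodule.exists_isCompl R
  let rE : E →ₗ[ℝ] R := R.linearProjOfIsCompl W' hW'
  obtain ⟨s', hs'⟩ := p.rangeRestrict.exists_rightInverse_of_surjective
    (LinearMap.range_rangeRestrict p)
  let t : E →ₗ[ℝ] C := s' ∘ₗ rE
  have hts : ∀ y : R, p (s' y) = (y : E) := fun y => by
    have := congrFun (congrArg (DFunLike.coe) hs') y
    simpa [LinearMap.rangeRestrict, Subtype.ext_iff] using congrArg Subtype.val this
  have ht : ∀ e : E, e ∈ R → p (t e) = e := fun e he => by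
    have : rE e = ⟨e, he⟩ := Submodule.linearProjOfIsCompl_apply_left hW' ⟨e, he⟩
    simp [t, this, hts]
  -- surjectivity of Φ
  obtain ⟨s, hs⟩ := π.exists_rightInverse_of_surjective (Submodule.range_mkQ R)
  have hsurj : Function.Surjective Φ := by
    intro g
    refine ⟨s ∘ₗ g ∘ₗ rC, ?_⟩
    ext x
    have hrx : rC (ι x) = x := Submodule.linearProjOfIsCompl_apply_left hW x
    have hsx : π (s (g x)) = g x := congrFun (congrArg (DFunLike.coe) hs) (g x)
    simp [Φ, hrx, hsx]
  -- kernel of Φ = range of delta1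
  have hker : LinearMap.ker Φ = LinearMap.range (delta1 p) := by
    apply le_antisymm
    · intro f hf
      have hf' : ∀ c : C, c ∈ K → f c ∈ R := by
        intro c hc
        have : Φ f ⟨c, hc⟩ = 0 := by rw [hf]; rfl
        simpa [Φ, π, ι, Submodule.Quotient.mk_eq_zero] using this
      refine ⟨(t ∘ₗ f ∘ₗ q, (f ∘ₗ q - f) ∘ₗ t), ?_⟩
      have hd : delta1 p (t ∘ₗ f ∘ₗ q, (f ∘ₗ q - f) ∘ₗ t)
          = p ∘ₗ (t ∘ₗ f ∘ₗ q) - ((f ∘ₗ q - f) ∘ₗ t) ∘ₗ p := rfl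
      rw [hd]
      ext c
      have h1 : p (t (f (q c))) = f (q c) := ht _ (hf' _ (hqmem c))
      have hu : t (p c) - c ∈ K := by
        simp [hK, LinearMap.mem_ker, map_sub, ht (p c) ⟨c, rfl⟩]
      have h2 : q (t (p c)) = q c + (t (p c) - c) := by
        have he : c + (t (p c) - c) = t (p c) := by abel
        rw [← he, map_add, hqid _ hu]; abel
      simp only [LinearMap.sub_apply, LinearMap.coe_comp, Function.comp_apply, h1, h2,
        map_add, map_sub]
      abel
    · rintro _ ⟨ψ, rfl⟩
      rw [LinearMap.mem_ker]
      ext x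
      have hx : p (x : C) = 0 := x.2
      have : delta1 p ψ (ι x) = p (ψ.1 (ι x)) - ψ.2 (p (ι x)) := rfl
      simp only [Φ, LinearMap.coe_comp, Function.comp_apply, LinearMap.coe_mk, AddHom.coe_mk,
        this, hx, map_zero, sub_zero, LinearMap.zero_apply, π]
      simp [ι, hx, Submodule.Quotient.mk_eq_zero, hR]
  exact ⟨(Submodule.quotEquivOfEq _ _ hker.symm).trans (Φ.quotKerEquivOfSurjective hsurj)⟩
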